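/- Let F be any probability distribution on ℝ with right-unbounded support. Then there exist probability distributions H₁ and H₂ on ℝ such that, for independent random variables ξ₁ with distribution H₁ and ξ₂ with distribution H₂, the random variable min(ξ₁, ξ₂) has distribution F and E max(ξ₁, 0) = E max(ξ₂, 0) = ∞, i.e., each of ξ₁ and ξ₂ has infinite first moment. -/

import Mathlib

open MeasureTheory ProbabilityTheory Filter Set Topology

set_option linter.unusedSectionVars false
open scoped ENNReal NNReal

namespace MinInf

variable (F : Measure ℝ) [IsProbabilityMeasure F]

noncomputable def Fb (x : ℝ) : ℝ := 1 - cdf F x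

lemma Fb_anti : Antitone (Fb F) := fun a b hab => by
  have := (cdf F).mono hab; simp only [Fb]; linarith

lemma Fb_le_one (x : ℝ) : Fb F x ≤ 1 := by
  have := cdf_nonneg F x; simp only [Fb]; linarith

lemma Fb_tendsto_atTop : Tendsto (Fb F) atTop (𝓝 0) := by
  have := (tendsto_const_nhds (α := ℝ) (x := (1:ℝ)) (f := atTop)).sub (tendsto_cdf_atTop F)
  show Tendsto (fun x => 1 - cdf F x) atTop (𝓝 0)
  simpa using this

lemma Fb_tendsto_atBot : Tendsto (Fb F) atBot (𝓝 1) := by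
  have := (tendsto_const_nhds (α := ℝ) (x := (1:ℝ)) (f := atBot)).sub (tendsto_cdf_atBot F)
  show Tendsto (fun x => 1 - cdf F x) atBot (𝓝 1)
  simpa using this

lemma one_sub_ofReal {c : ℝ} (h0 : 0 ≤ c) :
    1 - ENNReal.ofReal c = ENNReal.ofReal (1 - c) := by
  rw [ENNReal.ofReal_sub _ h0, ENNReal.ofReal_one]

lemma F_Ioi (x : ℝ) : F (Ioi x) = ENNReal.ofReal (Fb F x) := by
  rw [← compl_Iic, measure_compl measurableSet_Iic (measure_ne_top F _), measure_univ,
    ← ofReal_cdf F x, one_sub_ofReal (cdf_nonneg F x)]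
  rfl

variable (hF : ∀ x : ℝ, F (Set.Iic x) < 1)
include hF

lemma Fb_pos (x : ℝ) : 0 < Fb F x := by
  have h := hF x
  rw [← ofReal_cdf F x] at h
  have : cdf F x < 1 := ENNReal.ofReal_lt_one.mp h
  simp only [Fb]; linarith

noncomputable def L (x : ℝ) : ℝ := -Real.log (Fb F x)

lemma exp_neg_L (x : ℝ) : Real.exp (-(L F x)) = Fb F x := by
  rw [L, neg_neg, Real.exp_log (Fb_pos F hF x)]

lemma L_nonneg (x : ℝ) : 0 ≤ L F x := by
  have := Real.log_nonpos (Fb_pos F hF x).le (Fb_le_one F x)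
  simp only [L]; linarith

lemma L_mono : Monotone (L F) := fun a b hab => by
  have := Real.log_le_log (Fb_pos F hF b) (Fb_anti F hab)
  simp only [L]; linarith

lemma L_tendsto_atBot : Tendsto (L F) atBot (𝓝 0) := by
  have h : Tendsto (fun x => Real.log (Fb F x)) atBot (𝓝 (Real.log 1)) :=
    (Real.continuousAt_log one_ne_zero).tendsto.comp (Fb_tendsto_atBot F)
  have := h.neg
  show Tendsto (fun x => -Real.log (Fb F x)) atBot (𝓝 0)
  simpa using this

lemma L_cwa (x : ℝ) : ContinuousWithinAt (L F) (Ici x) x := by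
  have h1 : ContinuousWithinAt (fun y => (cdf F) y) (Ici x) x := (cdf F).right_continuous x
  have h2 : ContinuousWithinAt (Fb F) (Ici x) x := continuousWithinAt_const.sub h1
  exact ((Real.continuousAt_log (ne_of_gt (Fb_pos F hF x))).comp_continuousWithinAt h2).neg

lemma exists_step (a : ℝ) :
    ∃ b, a + 1 / Fb F a ≤ b ∧ Fb F b ≤ Fb F a * Real.exp (-1) := by
  have hε : (0:ℝ) < Fb F a * Real.exp (-1) := mul_pos (Fb_pos F hF a) (Real.exp_pos _)
  have h1 := eventually_ge_atTop (a + 1 / Fb F a)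
  have h2 : ∀ᶠ y in atTop, Fb F y ≤ Fb F a * Real.exp (-1) :=
    ((Fb_tendsto_atTop F).eventually_le_const hε)
  exact (h1.and h2).exists

noncomputable def seq : ℕ → ℝ
  | 0 => 0
  | n + 1 => (exists_step F hF (seq n)).choose

lemma seq_zero : seq F hF 0 = 0 := rfl

lemma seq_step (n : ℕ) : seq F hF n + 1 / Fb F (seq F hF n) ≤ seq F hF (n + 1) :=
  (exists_step F hF (seq F hF n)).choose_spec.1

lemma seq_step2 (n : ℕ) :
    Fb F (seq F hF (n + 1)) ≤ Fb F (seq F hF n) * Real.exp (-1) :=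
  (exists_step F hF (seq F hF n)).choose_spec.2

lemma one_le_inv_Fb (x : ℝ) : 1 ≤ 1 / Fb F x := by
  rw [le_div_iff₀ (Fb_pos F hF x), one_mul]; exact Fb_le_one F x

lemma seq_succ_ge (n : ℕ) : seq F hF n + 1 ≤ seq F hF (n + 1) :=
  le_trans (by linarith [one_le_inv_Fb F hF (seq F hF n)]) (seq_step F hF n)



lemma seq_mono : Monotone (seq F hF) :=
  monotone_nat_of_le_succ fun n => by linarith [seq_succ_ge F hF n]

lemma seq_ge (n : ℕ) : (n : ℝ) ≤ seq F hF n := by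
  induction n with
  | zero => simp [seq_zero]
  | succ k ih =>
    have := seq_succ_ge F hF k
    push_cast
    linarith

lemma seq_nonneg (n : ℕ) : 0 ≤ seq F hF n := by
  have := seq_ge F hF n
  exact le_trans (Nat.cast_nonneg n) this

lemma L_step (n : ℕ) : L F (seq F hF n) + 1 ≤ L F (seq F hF (n + 1)) := by
  have h2 := seq_step2 F hF n
  have hp1 := Fb_pos F hF (seq F hF (n+1))
  have hp0 := Fb_pos F hF (seq F hF n)
  have hlog := Real.log_le_log hp1 h2
  rw [Real.log_mul (ne_of_gt hp0) (Real.exp_ne_zero _), Real.log_exp] at hlog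
  simp only [L]
  linarith

noncomputable def t1 (x : ℝ) (j : ℕ) : ℝ :=
  L F (min x (seq F hF (2*j+1))) - L F (min x (seq F hF (2*j)))

noncomputable def t2 (x : ℝ) (j : ℕ) : ℝ :=
  L F (min x (seq F hF (2*j+2))) - L F (min x (seq F hF (2*j+1)))

lemma t1_nonneg (x : ℝ) (j : ℕ) : 0 ≤ t1 F hF x j :=
  sub_nonneg.2 (L_mono F hF (min_le_min le_rfl (seq_mono F hF (by omega))))

lemma t2_nonneg (x : ℝ) (j : ℕ) : 0 ≤ t2 F hF x j :=
  sub_nonneg.2 (L_mono F hF (min_le_min le_rfl (seq_mono F hF (by omega))))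

lemma t1_zero {x : ℝ} {j : ℕ} (h : x ≤ seq F hF (2*j)) : t1 F hF x j = 0 := by
  rw [t1, min_eq_left (h.trans (seq_mono F hF (by omega))), min_eq_left h, sub_self]

lemma t2_zero {x : ℝ} {j : ℕ} (h : x ≤ seq F hF (2*j+1)) : t2 F hF x j = 0 := by
  rw [t2, min_eq_left (h.trans (seq_mono F hF (by omega))), min_eq_left h, sub_self]

lemma le_seq_of_le {x : ℝ} {m n : ℕ} (h : x ≤ seq F hF m) (hmn : m ≤ n) :
    x ≤ seq F hF n := h.trans (seq_mono F hF hmn)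

lemma x_le_seq (x : ℝ) {n : ℕ} (h : (⌈x⌉₊ : ℕ) ≤ n) : x ≤ seq F hF n :=
  le_trans (Nat.le_ceil x) (le_trans (by exact_mod_cast Nat.cast_le.2 h) (seq_ge F hF n))

lemma t1_summable (x : ℝ) : Summable (t1 F hF x) := by
  apply summable_of_ne_finset_zero (s := Finset.range ⌈x⌉₊)
  intro j hj
  rw [Finset.mem_range, not_lt] at hj
  exact t1_zero F hF (x_le_seq F hF x (by omega))

lemma t2_summable (x : ℝ) : Summable (t2 F hF x) := by
  apply summable_of_ne_finset_zero (s := Finset.range ⌈x⌉₊)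
  intro j hj
  rw [Finset.mem_range, not_lt] at hj
  exact t2_zero F hF (x_le_seq F hF x (by omega))

noncomputable def L1 (x : ℝ) : ℝ := L F (min x 0) + ∑' j, t1 F hF x j

noncomputable def L2 (x : ℝ) : ℝ := ∑' j, t2 F hF x j

lemma L1_eq_sum (x : ℝ) (N : ℕ) (h : x ≤ seq F hF (2*N)) :
    L1 F hF x = L F (min x 0) + ∑ j ∈ Finset.range N, t1 F hF x j := by
  rw [L1, tsum_eq_sum]
  intro j hj
  rw [Finset.mem_range, not_lt] at hj
  exact t1_zero F hF (le_seq_of_le F hF h (by omega))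

lemma L2_eq_sum (x : ℝ) (N : ℕ) (h : x ≤ seq F hF (2*N+1)) :
    L2 F hF x = ∑ j ∈ Finset.range N, t2 F hF x j := by
  rw [L2, tsum_eq_sum]
  intro j hj
  rw [Finset.mem_range, not_lt] at hj
  exact t2_zero F hF (le_seq_of_le F hF h (by omega))

lemma L1_add_L2 (x : ℝ) : L1 F hF x + L2 F hF x = L F x := by
  rcases le_total x 0 with h | h
  · have h0 : x ≤ seq F hF (2*0) := by rw [show 2*0 = 0 from rfl, seq_zero]; exact h
    rw [L1_eq_sum F hF x 0 h0, L2_eq_sum F hF x 0 (le_seq_of_le F hF h0 (by omega))]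
    simp [min_eq_left h]
  · set N := ⌈x⌉₊
    have h2N : x ≤ seq F hF (2*N) := x_le_seq F hF x (by omega)
    rw [L1_eq_sum F hF x N h2N, L2_eq_sum F hF x N (le_seq_of_le F hF h2N (by omega))]
    have key : ∀ j ∈ Finset.range N, t1 F hF x j + t2 F hF x j =
        L F (min x (seq F hF (2*(j+1)))) - L F (min x (seq F hF (2*j))) := by
      intro j _
      have : 2*(j+1) = 2*j+2 := by ring
      rw [this, t1, t2]
      ring
    have := Finset.sum_range_sub (fun j => L F (min x (seq F hF (2*j)))) N
    calc L F (min x 0) + ∑ j ∈ Finset.range N, t1 F hF x j +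
          ∑ j ∈ Finset.range N, t2 F hF x j
        = L F (min x 0) + ∑ j ∈ Finset.range N, (t1 F hF x j + t2 F hF x j) := by
          rw [Finset.sum_add_distrib]; ring
      _ = L F (min x 0) + (L F (min x (seq F hF (2*N))) - L F (min x (seq F hF (2*0)))) := by
          rw [Finset.sum_congr rfl key, this]
      _ = L F x := by
          rw [min_eq_left h2N, min_eq_right h, seq_zero, min_eq_right h]
          ring

lemma L1_nonneg (x : ℝ) : 0 ≤ L1 F hF x :=
  add_nonneg (L_nonneg F hF _) (tsum_nonneg (t1_nonneg F hF x))

lemma L2_nonneg (x : ℝ) : 0 ≤ L2 F hF x := tsum_nonneg (t2_nonneg F hF x)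

lemma L1_le_L (x : ℝ) : L1 F hF x ≤ L F x := by
  have := L1_add_L2 F hF x; have := L2_nonneg F hF x; linarith

lemma L2_le_L (x : ℝ) : L2 F hF x ≤ L F x := by
  have := L1_add_L2 F hF x; have := L1_nonneg F hF x; linarith

lemma Lmin_mono (c : ℝ) : Monotone (fun x => L F (min x c)) := fun a b hab =>
  L_mono F hF (min_le_min hab le_rfl)

lemma t1_mono (j : ℕ) : Monotone (fun x => t1 F hF x j) := by
  intro a b hab
  simp only [t1]
  rcases le_total a (seq F hF (2*j)) with h | h
  · rw [min_eq_left (h.trans (seq_mono F hF (by omega))), min_eq_left h, sub_self]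
    have := t1_nonneg F hF b j
    simpa only [t1] using this
  · rw [min_eq_right h, min_eq_right (h.trans hab)]
    have := L_mono F hF (min_le_min hab (le_refl (seq F hF (2*j+1))))
    linarith

lemma t2_mono (j : ℕ) : Monotone (fun x => t2 F hF x j) := by
  intro a b hab
  simp only [t2]
  rcases le_total a (seq F hF (2*j+1)) with h | h
  · rw [min_eq_left (h.trans (seq_mono F hF (by omega))), min_eq_left h, sub_self]
    have := t2_nonneg F hF b j
    simpa only [t2] using this
  · rw [min_eq_right h, min_eq_right (h.trans hab)]
    have := L_mono F hF (min_le_min hab (le_refl (seq F hF (2*j+2))))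
    linarith

lemma L1_mono : Monotone (L1 F hF) := by
  intro a b hab
  refine add_le_add (L_mono F hF (min_le_min hab le_rfl)) ?_
  exact Summable.tsum_le_tsum (fun j => t1_mono F hF j hab) (t1_summable F hF a) (t1_summable F hF b)

lemma L2_mono : Monotone (L2 F hF) := by
  intro a b hab
  exact Summable.tsum_le_tsum (fun j => t2_mono F hF j hab) (t2_summable F hF a) (t2_summable F hF b)

lemma Lmin_cwa (c x : ℝ) : ContinuousWithinAt (fun y => L F (min y c)) (Ici x) x := by
  rcases lt_or_ge x c with h | h
  · have hev : ∀ᶠ y in nhdsWithin x (Ici x), L F (min y c) = L F y := by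
      filter_upwards [nhdsWithin_le_nhds (Iio_mem_nhds h)] with y hy
      rw [min_eq_left (le_of_lt hy)]
    exact ((L_cwa F hF x).congr_of_eventuallyEq hev (by rw [min_eq_left h.le]))
  · have hev : ∀ᶠ y in nhdsWithin x (Ici x), L F (min y c) = L F c := by
      filter_upwards [self_mem_nhdsWithin] with y (hy : x ≤ y)
      rw [min_eq_right (h.trans hy)]
    exact continuousWithinAt_const.congr_of_eventuallyEq hev (by rw [min_eq_right h])

lemma L1_cwa (x : ℝ) : ContinuousWithinAt (L1 F hF) (Ici x) x := by
  set N := ⌊x⌋₊ + 1 with hN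
  have hxN : x < seq F hF (2*N) := by
    have h1 : x < (N : ℝ) := by
      rw [hN]; push_cast; exact Nat.lt_floor_add_one x
    have h2 : (N:ℝ) ≤ (2*N : ℕ) := by push_cast; linarith [Nat.cast_nonneg (α := ℝ) N]
    exact lt_of_lt_of_le h1 (h2.trans (seq_ge F hF (2*N)))
  have hev : ∀ᶠ y in nhdsWithin x (Ici x),
      L1 F hF y = L F (min y 0) + ∑ j ∈ Finset.range N, t1 F hF y j := by
    filter_upwards [nhdsWithin_le_nhds (Iio_mem_nhds hxN)] with y hy
    exact L1_eq_sum F hF y N (le_of_lt hy)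
  have hg : ContinuousWithinAt
      (fun y => L F (min y 0) + ∑ j ∈ Finset.range N, t1 F hF y j) (Ici x) x := by
    apply (Lmin_cwa F hF 0 x).add
    exact tendsto_finset_sum _ fun j _ => (Lmin_cwa F hF _ x).sub (Lmin_cwa F hF _ x)
  exact hg.congr_of_eventuallyEq hev (L1_eq_sum F hF x N hxN.le)

lemma L2_cwa (x : ℝ) : ContinuousWithinAt (L2 F hF) (Ici x) x := by
  set N := ⌊x⌋₊ + 1 with hN
  have hxN : x < seq F hF (2*N+1) := by
    have h1 : x < (N : ℝ) := by
      rw [hN]; push_cast; exact Nat.lt_floor_add_one x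
    have h2 : (N:ℝ) ≤ (2*N+1 : ℕ) := by push_cast; linarith [Nat.cast_nonneg (α := ℝ) N]
    exact lt_of_lt_of_le h1 (h2.trans (seq_ge F hF (2*N+1)))
  have hev : ∀ᶠ y in nhdsWithin x (Ici x),
      L2 F hF y = ∑ j ∈ Finset.range N, t2 F hF y j := by
    filter_upwards [nhdsWithin_le_nhds (Iio_mem_nhds hxN)] with y hy
    exact L2_eq_sum F hF y N (le_of_lt hy)
  have hg : ContinuousWithinAt
      (fun y => ∑ j ∈ Finset.range N, t2 F hF y j) (Ici x) x :=
    tendsto_finset_sum _ fun j _ => (Lmin_cwa F hF _ x).sub (Lmin_cwa F hF _ x)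
  exact hg.congr_of_eventuallyEq hev (L2_eq_sum F hF x N hxN.le)

lemma L1_const (k : ℕ) {x : ℝ} (h1 : seq F hF (2*k+1) ≤ x) (h2 : x ≤ seq F hF (2*k+2)) :
    L1 F hF x = L1 F hF (seq F hF (2*k+1)) := by
  have hx2N : x ≤ seq F hF (2*(k+1)) := by rw [show 2*(k+1) = 2*k+2 from by ring]; exact h2
  have hs2N : seq F hF (2*k+1) ≤ seq F hF (2*(k+1)) := seq_mono F hF (by omega)
  have hx0 : (0:ℝ) ≤ x := (seq_nonneg F hF (2*k+1)).trans h1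
  rw [L1_eq_sum F hF x (k+1) hx2N, L1_eq_sum F hF _ (k+1) hs2N]
  rw [min_eq_right hx0, min_eq_right (seq_nonneg F hF (2*k+1))]
  congr 1
  apply Finset.sum_congr rfl
  intro j hj
  rw [Finset.mem_range] at hj
  have ha : seq F hF (2*j+1) ≤ seq F hF (2*k+1) := seq_mono F hF (by omega)
  have hb : seq F hF (2*j) ≤ seq F hF (2*k+1) := seq_mono F hF (by omega)
  rw [t1, t1, min_eq_right (ha.trans h1), min_eq_right (hb.trans h1),
    min_eq_right ha, min_eq_right hb]

lemma L2_const (k : ℕ) {x : ℝ} (h1 : seq F hF (2*k) ≤ x) (h2 : x ≤ seq F hF (2*k+1)) :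
    L2 F hF x = L2 F hF (seq F hF (2*k)) := by
  have hs : seq F hF (2*k) ≤ seq F hF (2*k+1) := seq_mono F hF (by omega)
  rw [L2_eq_sum F hF x k h2, L2_eq_sum F hF _ k hs]
  apply Finset.sum_congr rfl
  intro j hj
  rw [Finset.mem_range] at hj
  have ha : seq F hF (2*j+2) ≤ seq F hF (2*k) := seq_mono F hF (by omega)
  have hb : seq F hF (2*j+1) ≤ seq F hF (2*k) := seq_mono F hF (by omega)
  rw [t2, t2, min_eq_right (ha.trans h1), min_eq_right (hb.trans h1),
    min_eq_right ha, min_eq_right hb]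

lemma L1_seq_lb (k : ℕ) : (k : ℝ) ≤ L1 F hF (seq F hF (2*k)) := by
  rw [L1_eq_sum F hF _ k le_rfl]
  have hterm : ∀ j ∈ Finset.range k, (1:ℝ) ≤ t1 F hF (seq F hF (2*k)) j := by
    intro j hj
    rw [Finset.mem_range] at hj
    have ha : seq F hF (2*j+1) ≤ seq F hF (2*k) := seq_mono F hF (by omega)
    have hb : seq F hF (2*j) ≤ seq F hF (2*k) := seq_mono F hF (by omega)
    rw [t1, min_eq_right ha, min_eq_right hb]
    linarith [L_step F hF (2*j)]
  have hsum : (k:ℝ) ≤ ∑ j ∈ Finset.range k, t1 F hF (seq F hF (2*k)) j := by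
    calc (k:ℝ) = ∑ _j ∈ Finset.range k, (1:ℝ) := by simp
      _ ≤ _ := Finset.sum_le_sum hterm
  have := L_nonneg F hF (min (seq F hF (2*k)) 0)
  linarith

lemma L2_seq_lb (k : ℕ) : (k : ℝ) ≤ L2 F hF (seq F hF (2*k+1)) := by
  rw [L2_eq_sum F hF _ k le_rfl]
  have hterm : ∀ j ∈ Finset.range k, (1:ℝ) ≤ t2 F hF (seq F hF (2*k+1)) j := by
    intro j hj
    rw [Finset.mem_range] at hj
    have ha : seq F hF (2*j+2) ≤ seq F hF (2*k+1) := seq_mono F hF (by omega)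
    have hb : seq F hF (2*j+1) ≤ seq F hF (2*k+1) := seq_mono F hF (by omega)
    rw [t2, min_eq_right ha, min_eq_right hb]
    linarith [L_step F hF (2*j+1)]
  calc (k:ℝ) = ∑ _j ∈ Finset.range k, (1:ℝ) := by simp
    _ ≤ _ := Finset.sum_le_sum hterm

lemma L1_tendsto_atTop : Tendsto (L1 F hF) atTop atTop := by
  apply tendsto_atTop_atTop_of_monotone (L1_mono F hF)
  intro b
  refine ⟨seq F hF (2*⌈b⌉₊), ?_⟩
  exact le_trans (Nat.le_ceil b) (L1_seq_lb F hF ⌈b⌉₊)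

lemma L2_tendsto_atTop : Tendsto (L2 F hF) atTop atTop := by
  apply tendsto_atTop_atTop_of_monotone (L2_mono F hF)
  intro b
  refine ⟨seq F hF (2*⌈b⌉₊+1), ?_⟩
  exact le_trans (Nat.le_ceil b) (L2_seq_lb F hF ⌈b⌉₊)

lemma L1_tendsto_atBot : Tendsto (L1 F hF) atBot (𝓝 0) := by
  apply (L_tendsto_atBot F hF).congr'
  filter_upwards [eventually_le_atBot (0:ℝ)] with x hx
  have h0 : x ≤ seq F hF (2*0) := by rw [show 2*0 = 0 from rfl, seq_zero]; exact hx
  rw [L1_eq_sum F hF x 0 h0]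
  simp [min_eq_left hx]

lemma L2_tendsto_atBot : Tendsto (L2 F hF) atBot (𝓝 0) := by
  apply tendsto_const_nhds.congr'
  filter_upwards [eventually_le_atBot (0:ℝ)] with x hx
  have h0 : x ≤ seq F hF (2*0+1) := by
    have := seq_nonneg F hF (2*0+1); linarith
  rw [L2_eq_sum F hF x 0 h0]
  simp

noncomputable def cdf1 : StieltjesFunction ℝ where
  toFun := fun x => 1 - Real.exp (-(L1 F hF x))
  mono' := fun a b hab => by
    have := L1_mono F hF hab
    have := Real.exp_le_exp.2 (neg_le_neg this)
    simp only []
    linarith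
  right_continuous' := fun x => by
    exact continuousWithinAt_const.sub
      (Real.continuous_exp.continuousAt.comp_continuousWithinAt (L1_cwa F hF x).neg)

noncomputable def cdf2 : StieltjesFunction ℝ where
  toFun := fun x => 1 - Real.exp (-(L2 F hF x))
  mono' := fun a b hab => by
    have := L2_mono F hF hab
    have := Real.exp_le_exp.2 (neg_le_neg this)
    simp only []
    linarith
  right_continuous' := fun x => by
    exact continuousWithinAt_const.sub
      (Real.continuous_exp.continuousAt.comp_continuousWithinAt (L2_cwa F hF x).neg)

lemma cdf1_atBot : Tendsto (cdf1 F hF) atBot (𝓝 0) := by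
  have h : Tendsto (fun x => Real.exp (-(L1 F hF x))) atBot (𝓝 (Real.exp (-0))) :=
    (Real.continuous_exp.tendsto _).comp (L1_tendsto_atBot F hF).neg
  have := tendsto_const_nhds (α := ℝ) (x := (1:ℝ)) (f := atBot) |>.sub h
  simpa [cdf1] using this

lemma cdf2_atBot : Tendsto (cdf2 F hF) atBot (𝓝 0) := by
  have h : Tendsto (fun x => Real.exp (-(L2 F hF x))) atBot (𝓝 (Real.exp (-0))) :=
    (Real.continuous_exp.tendsto _).comp (L2_tendsto_atBot F hF).neg
  have := tendsto_const_nhds (α := ℝ) (x := (1:ℝ)) (f := atBot) |>.sub h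
  simpa [cdf2] using this

lemma cdf1_atTop : Tendsto (cdf1 F hF) atTop (𝓝 1) := by
  have h : Tendsto (fun x => Real.exp (-(L1 F hF x))) atTop (𝓝 0) :=
    Real.tendsto_exp_atBot.comp (tendsto_neg_atTop_atBot.comp (L1_tendsto_atTop F hF))
  have := tendsto_const_nhds (α := ℝ) (x := (1:ℝ)) (f := atTop) |>.sub h
  simpa [cdf1] using this

lemma cdf2_atTop : Tendsto (cdf2 F hF) atTop (𝓝 1) := by
  have h : Tendsto (fun x => Real.exp (-(L2 F hF x))) atTop (𝓝 0) :=
    Real.tendsto_exp_atBot.comp (tendsto_neg_atTop_atBot.comp (L2_tendsto_atTop F hF))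
  have := tendsto_const_nhds (α := ℝ) (x := (1:ℝ)) (f := atTop) |>.sub h
  simpa [cdf2] using this

instance prob1 : IsProbabilityMeasure (cdf1 F hF).measure := by
  constructor
  rw [StieltjesFunction.measure_univ _ (cdf1_atBot F hF) (cdf1_atTop F hF)]
  norm_num

instance prob2 : IsProbabilityMeasure (cdf2 F hF).measure := by
  constructor
  rw [StieltjesFunction.measure_univ _ (cdf2_atBot F hF) (cdf2_atTop F hF)]
  norm_num

lemma exp_le_one_L1 (x : ℝ) : Real.exp (-(L1 F hF x)) ≤ 1 :=
  Real.exp_le_one_iff.2 (by linarith [L1_nonneg F hF x])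

lemma exp_le_one_L2 (x : ℝ) : Real.exp (-(L2 F hF x)) ≤ 1 :=
  Real.exp_le_one_iff.2 (by linarith [L2_nonneg F hF x])

lemma H1_Ioi (x : ℝ) :
    (cdf1 F hF).measure (Ioi x) = ENNReal.ofReal (Real.exp (-(L1 F hF x))) := by
  have hIic := StieltjesFunction.measure_Iic (cdf1 F hF) (cdf1_atBot F hF) x
  rw [← compl_Iic, measure_compl measurableSet_Iic (measure_ne_top _ _), measure_univ, hIic]
  rw [show cdf1 F hF x - 0 = 1 - Real.exp (-(L1 F hF x)) from by simp [cdf1]]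
  rw [one_sub_ofReal (by linarith [exp_le_one_L1 F hF x])]
  congr 1
  ring

lemma H2_Ioi (x : ℝ) :
    (cdf2 F hF).measure (Ioi x) = ENNReal.ofReal (Real.exp (-(L2 F hF x))) := by
  have hIic := StieltjesFunction.measure_Iic (cdf2 F hF) (cdf2_atBot F hF) x
  rw [← compl_Iic, measure_compl measurableSet_Iic (measure_ne_top _ _), measure_univ, hIic]
  rw [show cdf2 F hF x - 0 = 1 - Real.exp (-(L2 F hF x)) from by simp [cdf2]]
  rw [one_sub_ofReal (by linarith [exp_le_one_L2 F hF x])]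
  congr 1
  ring

lemma H_mul (x : ℝ) :
    (cdf1 F hF).measure (Ioi x) * (cdf2 F hF).measure (Ioi x) = F (Ioi x) := by
  rw [H1_Ioi, H2_Ioi, ← ENNReal.ofReal_mul (Real.exp_nonneg _), ← Real.exp_add, F_Ioi]
  rw [show -(L1 F hF x) + -(L2 F hF x) = -(L1 F hF x + L2 F hF x) from by ring,
    L1_add_L2 F hF x, exp_neg_L F hF x]

lemma key1 (k : ℕ) :
    1 ≤ ∫⁻ t in Ioc (seq F hF (2*k+1)) (seq F hF (2*k+2)), (cdf1 F hF).measure (Ioi t) := by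
  set a := seq F hF (2*k+1) with ha
  set b := seq F hF (2*k+2) with hb
  set c := Real.exp (-(L1 F hF a)) with hc
  have heq : ∀ t ∈ Ioc a b, (cdf1 F hF).measure (Ioi t) = ENNReal.ofReal c := by
    intro t ht
    rw [H1_Ioi, hc, L1_const F hF k ht.1.le ht.2]
  rw [setLIntegral_congr_fun measurableSet_Ioc heq, setLIntegral_const, Real.volume_Ioc]
  rw [← ENNReal.ofReal_mul (Real.exp_nonneg _), ← ENNReal.ofReal_one]
  apply ENNReal.ofReal_le_ofReal
  have hFb := Fb_pos F hF a
  have hc1 : Fb F a ≤ c := by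
    rw [hc, ← exp_neg_L F hF a]
    exact Real.exp_le_exp.2 (neg_le_neg (L1_le_L F hF a))
  have hba : 1 / Fb F a ≤ b - a := by
    have := seq_step F hF (2*k+1)
    rw [← ha] at this
    linarith [this]
  calc (1:ℝ) = Fb F a * (1 / Fb F a) := by field_simp
    _ ≤ c * (b - a) := mul_le_mul hc1 hba (by positivity) (hFb.le.trans hc1)

lemma key2 (k : ℕ) :
    1 ≤ ∫⁻ t in Ioc (seq F hF (2*k)) (seq F hF (2*k+1)), (cdf2 F hF).measure (Ioi t) := by
  set a := seq F hF (2*k) with ha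
  set b := seq F hF (2*k+1) with hb
  set c := Real.exp (-(L2 F hF a)) with hc
  have heq : ∀ t ∈ Ioc a b, (cdf2 F hF).measure (Ioi t) = ENNReal.ofReal c := by
    intro t ht
    rw [H2_Ioi, hc, L2_const F hF k ht.1.le ht.2]
  rw [setLIntegral_congr_fun measurableSet_Ioc heq, setLIntegral_const, Real.volume_Ioc]
  rw [← ENNReal.ofReal_mul (Real.exp_nonneg _), ← ENNReal.ofReal_one]
  apply ENNReal.ofReal_le_ofReal
  have hFb := Fb_pos F hF a
  have hc1 : Fb F a ≤ c := by
    rw [hc, ← exp_neg_L F hF a]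
    exact Real.exp_le_exp.2 (neg_le_neg (L2_le_L F hF a))
  have hba : 1 / Fb F a ≤ b - a := by
    have := seq_step F hF (2*k)
    rw [← ha] at this
    linarith [this]
  calc (1:ℝ) = Fb F a * (1 / Fb F a) := by field_simp
    _ ≤ c * (b - a) := mul_le_mul hc1 hba (by positivity) (hFb.le.trans hc1)

omit hF

lemma moment_top (H : Measure ℝ) [IsProbabilityMeasure H] (a b : ℕ → ℝ)
    (h0 : ∀ k, 0 ≤ a k) (hab : ∀ k, a k ≤ b k) (hchain : ∀ k, b k ≤ a (k+1))
    (hkey : ∀ k, 1 ≤ ∫⁻ t in Ioc (a k) (b k), H (Ioi t)) :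
    ∫⁻ x, ENNReal.ofReal (max x 0) ∂H = ⊤ := by
  rw [lintegral_eq_lintegral_meas_lt H (ae_of_all _ fun x => le_max_right x 0)
    (measurable_id.max measurable_const).aemeasurable]
  have hset : ∀ t ∈ Ioi (0:ℝ), H {a : ℝ | t < max a 0} = H (Ioi t) := by
    intro t ht
    congr 1
    ext ω
    simp only [mem_setOf_eq, mem_Ioi, lt_max_iff]
    exact ⟨fun h => h.elim id (fun h2 => absurd ht (by simp; linarith)), Or.inl⟩
  rw [setLIntegral_congr_fun measurableSet_Ioi hset]
  by_contra hne
  obtain ⟨n, hn⟩ := ENNReal.exists_nat_gt (lt_top_iff_ne_top.2 hne).ne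
  have amono : Monotone a := monotone_nat_of_le_succ fun k => (hab k).trans (hchain k)
  have hb_le_a : ∀ {i j : ℕ}, i < j → b i ≤ a j := fun {i j} hij =>
    (hchain i).trans (amono hij)
  have hdisj : (↑(Finset.range n) : Set ℕ).PairwiseDisjoint (fun k => Ioc (a k) (b k)) := by
    intro i _ j _ hij
    rcases hij.lt_or_gt with h | h
    · exact Set.disjoint_left.2 fun x hx1 hx2 => absurd hx2.1 (by
        have := hx1.2.trans (hb_le_a h); linarith)
    · exact Set.disjoint_left.2 fun x hx1 hx2 => absurd hx1.1 (by
        have := hx2.2.trans (hb_le_a h); linarith)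
  have hsub : (⋃ k ∈ Finset.range n, Ioc (a k) (b k)) ⊆ Ioi 0 := by
    intro x hx
    simp only [mem_iUnion] at hx
    obtain ⟨k, _, hk⟩ := hx
    exact lt_of_le_of_lt (h0 k) hk.1
  have hle : (n : ℝ≥0∞) ≤ ∫⁻ t in Ioi (0:ℝ), H (Ioi t) := by
    calc (n : ℝ≥0∞) = ∑ k ∈ Finset.range n, 1 := by simp
      _ ≤ ∑ k ∈ Finset.range n, ∫⁻ t in Ioc (a k) (b k), H (Ioi t) :=
          Finset.sum_le_sum fun k _ => hkey k
      _ = ∫⁻ t in ⋃ k ∈ Finset.range n, Ioc (a k) (b k), H (Ioi t) :=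
          (lintegral_biUnion_finset hdisj (fun _ _ => measurableSet_Ioc) _).symm
      _ ≤ ∫⁻ t in Ioi (0:ℝ), H (Ioi t) := lintegral_mono_set hsub
  exact absurd (hle.trans_lt hn) (lt_irrefl _)

end MinInf

/-- Any probability distribution `F` on `ℝ` with right-unbounded support
is the distribution of the minimum of two independent random variables each of which has
infinite first moment: `E max(ξᵢ, 0) = ∞`. -/
theorem min_of_two_with_infinite_first_moment
    (F : Measure ℝ) [IsProbabilityMeasure F]
    (hF : ∀ x : ℝ, F (Set.Iic x) < 1) :
    ∃ H₁ H₂ : Measure ℝ, IsProbabilityMeasure H₁ ∧ IsProbabilityMeasure H₂ ∧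
      ∀ (Ω : Type) (mΩ : MeasurableSpace Ω) (μ : Measure Ω), IsProbabilityMeasure μ →
        ∀ ξ₁ ξ₂ : Ω → ℝ, Measurable ξ₁ → Measurable ξ₂ →
          μ.map ξ₁ = H₁ → μ.map ξ₂ = H₂ → IndepFun ξ₁ ξ₂ μ →
          μ.map (fun ω => min (ξ₁ ω) (ξ₂ ω)) = F ∧
          ∫⁻ ω, ENNReal.ofReal (max (ξ₁ ω) 0) ∂μ = ⊤ ∧
          ∫⁻ ω, ENNReal.ofReal (max (ξ₂ ω) 0) ∂μ = ⊤ := by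
  refine ⟨(MinInf.cdf1 F hF).measure, (MinInf.cdf2 F hF).measure,
    MinInf.prob1 F hF, MinInf.prob2 F hF, ?_⟩
  intro Ω mΩ μ hμ ξ₁ ξ₂ hm1 hm2 hmap1 hmap2 hindep
  haveI := hμ
  have hmin : Measurable fun ω => min (ξ₁ ω) (ξ₂ ω) := hm1.min hm2
  have hIoi : ∀ x : ℝ, μ.map (fun ω => min (ξ₁ ω) (ξ₂ ω)) (Set.Ioi x) = F (Set.Ioi x) := by
    intro x
    rw [Measure.map_apply hmin measurableSet_Ioi]
    have hpre : (fun ω => min (ξ₁ ω) (ξ₂ ω)) ⁻¹' (Set.Ioi x)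
        = ξ₁ ⁻¹' (Set.Ioi x) ∩ ξ₂ ⁻¹' (Set.Ioi x) := by
      ext ω; simp [lt_min_iff]
    rw [hpre, hindep.measure_inter_preimage_eq_mul _ _ measurableSet_Ioi measurableSet_Ioi,
      ← Measure.map_apply hm1 measurableSet_Ioi, ← Measure.map_apply hm2 measurableSet_Ioi,
      hmap1, hmap2, MinInf.H_mul F hF x]
  refine ⟨?_, ?_, ?_⟩
  · haveI hprob : IsProbabilityMeasure (μ.map fun ω => min (ξ₁ ω) (ξ₂ ω)) :=
      Measure.isProbabilityMeasure_map hmin.aemeasurable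
    apply Measure.ext_of_Iic
    intro x
    rw [← Set.compl_Ioi,
      measure_compl measurableSet_Ioi (measure_ne_top _ _),
      measure_compl measurableSet_Ioi (measure_ne_top _ _),
      measure_univ, measure_univ, hIoi x]
  · have heq : ∫⁻ ω, ENNReal.ofReal (max (ξ₁ ω) 0) ∂μ
        = ∫⁻ x, ENNReal.ofReal (max x 0) ∂(μ.map ξ₁) :=
      (lintegral_map ((measurable_id.max measurable_const).ennreal_ofReal) hm1).symm
    rw [heq, hmap1]
    exact MinInf.moment_top _ (fun k => MinInf.seq F hF (2*k+1)) (fun k => MinInf.seq F hF (2*k+2))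
      (fun k => MinInf.seq_nonneg F hF _) (fun k => MinInf.seq_mono F hF (by omega))
      (fun k => MinInf.seq_mono F hF (by omega)) (fun k => MinInf.key1 F hF k)
  · have heq : ∫⁻ ω, ENNReal.ofReal (max (ξ₂ ω) 0) ∂μ
        = ∫⁻ x, ENNReal.ofReal (max x 0) ∂(μ.map ξ₂) :=
      (lintegral_map ((measurable_id.max measurable_const).ennreal_ofReal) hm2).symm
    rw [heq, hmap2]
    exact MinInf.moment_top _ (fun k => MinInf.seq F hF (2*k)) (fun k => MinInf.seq F hF (2*k+1))
      (fun k => MinInf.seq_nonneg F hF _) (fun k => MinInf.seq_mono F hF (by omega))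
      (fun k => MinInf.seq_mono F hF (by omega)) (fun k => MinInf.key2 F hF k)
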